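/- Let S_1,…,S_m be finite sets and {f_{s_1,…,s_m}} an interlacing family of real-rooted degree-n polynomials with positive leading coefficients. Then for every index 1 ≤ j ≤ n there exist assignments (a_1,…,a_m) and (b_1,…,b_m) in S_1×…×S_m such that λ_j(f_{a_1,…,a_m}) ≥ λ_j(f_∅) ≥ λ_j(f_{b_1,…,b_m}). -/

import Mathlib

open Polynomial BigOperators Finset

open scoped Classical

namespace IFam


lemma prod_splice {M : Type*} [CommMonoid M] (f : ℕ → M) :
    ∀ (K p : ℕ), p ≤ K →
      ∏ j ∈ Finset.range (K+1), f j
        = f p * ∏ j ∈ Finset.range K, f (if j < p then j else j + 1) := by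
  intro K
  induction K with
  | zero =>
    intro p hp
    interval_cases p
    simp
  | succ K ih =>
    intro p hp
    rcases eq_or_lt_of_le hp with h | h
    · subst h
      rw [Finset.prod_range_succ]
      rw [show (∏ j ∈ Finset.range (K+1), f (if j < K + 1 then j else j + 1))
          = ∏ j ∈ Finset.range (K+1), f j from
        Finset.prod_congr rfl (fun j hj => by rw [if_pos (Finset.mem_range.mp hj)])]
      exact mul_comm _ _
    · have hp' : p ≤ K := by omega
      rw [Finset.prod_range_succ, ih p hp', Finset.prod_range_succ,
        if_neg (by omega), mul_assoc]

lemma prod_sign_pos (K s : ℕ) (a : ℕ → ℝ) (x : ℝ) (hs : s ≤ K)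
    (h1 : ∀ k, k < s → x < a k) (h2 : ∀ k, s ≤ k → k < K → a k < x) :
    0 < (-1 : ℝ)^s * ∏ k ∈ Finset.range K, (x - a k) := by
  have hsplit : ∏ k ∈ Finset.range K, (x - a k)
      = (∏ k ∈ Finset.range s, (x - a k)) * ∏ k ∈ Finset.Ico s K, (x - a k) := by
    rw [Finset.range_eq_Ico, ← Finset.prod_Ico_consecutive _ (Nat.zero_le s) hs,
      ← Finset.range_eq_Ico]
  rw [hsplit, ← mul_assoc]
  have h01 : (-1:ℝ)^s * ∏ k ∈ Finset.range s, (x - a k)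
      = ∏ k ∈ Finset.range s, (a k - x) := by
    rw [show ((-1:ℝ)^s) = ∏ _k ∈ Finset.range s, (-1:ℝ) by simp,
      ← Finset.prod_mul_distrib]
    exact Finset.prod_congr rfl (fun k _ => by ring)
  rw [h01]
  apply mul_pos
  · exact Finset.prod_pos (fun k hk => by
      have := h1 k (Finset.mem_range.mp hk); linarith)
  · exact Finset.prod_pos (fun k hk => by
      obtain ⟨hk1, hk2⟩ := Finset.mem_Ico.mp hk
      have := h2 k hk1 hk2; linarith)

lemma prod_sign_nonneg (K s : ℕ) (a : ℕ → ℝ) (x : ℝ) (hs : s ≤ K)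
    (h1 : ∀ k, k < s → x ≤ a k) (h2 : ∀ k, s ≤ k → k < K → a k ≤ x) :
    0 ≤ (-1 : ℝ)^s * ∏ k ∈ Finset.range K, (x - a k) := by
  have hsplit : ∏ k ∈ Finset.range K, (x - a k)
      = (∏ k ∈ Finset.range s, (x - a k)) * ∏ k ∈ Finset.Ico s K, (x - a k) := by
    rw [Finset.range_eq_Ico, ← Finset.prod_Ico_consecutive _ (Nat.zero_le s) hs,
      ← Finset.range_eq_Ico]
  rw [hsplit, ← mul_assoc]
  have h01 : (-1:ℝ)^s * ∏ k ∈ Finset.range s, (x - a k)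
      = ∏ k ∈ Finset.range s, (a k - x) := by
    rw [show ((-1:ℝ)^s) = ∏ _k ∈ Finset.range s, (-1:ℝ) by simp,
      ← Finset.prod_mul_distrib]
    exact Finset.prod_congr rfl (fun k _ => by ring)
  rw [h01]
  apply mul_nonneg
  · exact Finset.prod_nonneg (fun k hk => by
      have := h1 k (Finset.mem_range.mp hk); linarith)
  · exact Finset.prod_nonneg (fun k hk => by
      obtain ⟨hk1, hk2⟩ := Finset.mem_Ico.mp hk
      have := h2 k hk1 hk2; linarith)

lemma poly_ivt (p : Polynomial ℝ) {α b : ℝ} (hab : α ≤ b)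
    (h : p.eval α * p.eval b ≤ 0) :
    ∃ r, α ≤ r ∧ r ≤ b ∧ p.eval r = 0 := by
  have hcont : ContinuousOn (fun x => p.eval x) (Set.Icc α b) :=
    (p.continuous).continuousOn
  rcases mul_nonpos_iff.mp h with ⟨h1, h2⟩ | ⟨h1, h2⟩
  · obtain ⟨r, hr, hr0⟩ := intermediate_value_Icc' hab hcont ⟨h2, h1⟩
    exact ⟨r, hr.1, hr.2, hr0⟩
  · obtain ⟨r, hr, hr0⟩ := intermediate_value_Icc hab hcont ⟨h1, h2⟩
    exact ⟨r, hr.1, hr.2, hr0⟩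

lemma antitone_of_adjacent {x : ℕ → ℝ} {K : ℕ} (h : ∀ i, i + 1 ≤ K → x (i+1) ≤ x i) :
    ∀ i j, i ≤ j → j ≤ K → x j ≤ x i := by
  intro i j hij hjK
  induction j with
  | zero =>
    have : i = 0 := by omega
    subst this; rfl
  | succ j ih =>
    rcases Nat.lt_or_ge i (j+1) with h' | h'
    · exact le_trans (h j hjK) (ih (by omega) (by omega))
    · have : i = j + 1 := by omega
      subst this; rfl

lemma antitone_eq_of_multiset {K : ℕ} (a b : Fin K → ℝ) (ha : Antitone a) (hb : Antitone b)
    (h : Multiset.map a Finset.univ.val = Multiset.map b Finset.univ.val) : a = b := by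
  have hla : Multiset.map a Finset.univ.val = ↑(List.ofFn a) := by
    rw [Fin.univ_val_map]
  have hlb : Multiset.map b Finset.univ.val = ↑(List.ofFn b) := by
    rw [Fin.univ_val_map]
  rw [hla, hlb, Multiset.coe_eq_coe] at h
  haveI : Std.Antisymm (fun x y : ℝ => y ≤ x) := ⟨fun _ _ h1 h2 => le_antisymm h2 h1⟩
  have hsa : (List.ofFn a).Pairwise (fun x y : ℝ => y ≤ x) :=
    List.pairwise_ofFn.mpr (fun i j hij => ha hij.le)
  have hsb : (List.ofFn b).Pairwise (fun x y : ℝ => y ≤ x) :=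
    List.pairwise_ofFn.mpr (fun i j hij => hb hij.le)
  exact List.ofFn_injective (List.Perm.eq_of_pairwise' hsa hsb h)

lemma factor_unique {K : ℕ} (cu cv : ℝ) (hcu : 0 < cu) (hcv : 0 < cv)
    (a b : Fin K → ℝ) (ha : Antitone a) (hb : Antitone b)
    (h : C cu * ∏ j, (X - C (a j)) = C cv * ∏ j, (X - C (b j))) :
    cu = cv ∧ a = b := by
  have hPa : (∏ j, (X - C (a j)) : Polynomial ℝ).Monic :=
    monic_prod_of_monic _ _ (fun j _ => monic_X_sub_C _)
  have hPb : (∏ j, (X - C (b j)) : Polynomial ℝ).Monic :=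
    monic_prod_of_monic _ _ (fun j _ => monic_X_sub_C _)
  have hcc : cu = cv := by
    have := congrArg leadingCoeff h
    rwa [leadingCoeff_mul, leadingCoeff_mul, leadingCoeff_C, leadingCoeff_C,
      hPa.leadingCoeff, hPb.leadingCoeff, mul_one, mul_one] at this
  subst hcc
  have hC : (C cu : Polynomial ℝ) ≠ 0 := by
    simpa using hcu.ne'
  have hprod : (∏ j, (X - C (a j)) : Polynomial ℝ) = ∏ j, (X - C (b j)) :=
    mul_left_cancel₀ hC h
  have hma : (∏ j, (X - C (a j)) : Polynomial ℝ)
      = ((Multiset.map a Finset.univ.val).map fun r => X - C r).prod := by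
    rw [Multiset.map_map]
    rfl
  have hmb : (∏ j, (X - C (b j)) : Polynomial ℝ)
      = ((Multiset.map b Finset.univ.val).map fun r => X - C r).prod := by
    rw [Multiset.map_map]
    rfl
  have hroots : Multiset.map a Finset.univ.val = Multiset.map b Finset.univ.val := by
    have h1 := congrArg Polynomial.roots (hma.symm.trans (hprod.trans hmb))
    rwa [roots_multiset_prod_X_sub_C, roots_multiset_prod_X_sub_C] at h1
  exact ⟨rfl, antitone_eq_of_multiset a b ha hb hroots⟩


lemma core (ι : Type) [Fintype ι] [Nonempty ι] (c : ι → ℝ) (hc : ∀ u, 0 < c u) :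
    ∀ (N : ℕ) (δ : ι → ℕ → ℝ) (γ : ℕ → ℝ),
    (∀ u i j, i ≤ j → j ≤ N → δ u j ≤ δ u i) →
    (∀ i j, i ≤ j → j < N → γ j ≤ γ i) →
    (∀ u j, j < N → γ j ≤ δ u j ∧ δ u (j+1) ≤ γ j) →
    ∃ x : ℕ → ℝ,
      (∀ i j, i ≤ j → j ≤ N → x j ≤ x i) ∧
      (∀ j, j < N → γ j ≤ x j ∧ x (j+1) ≤ γ j) ∧
      (∀ j, j ≤ N → (∃ u, x j ≤ δ u j) ∧ (∃ u, δ u j ≤ x j)) ∧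
      (∑ u, C (c u) * ∏ j ∈ Finset.range (N+1), (X - C (δ u j)))
        = C (∑ u, c u) * ∏ j ∈ Finset.range (N+1), (X - C (x j)) := by
  have hcF : (0:ℝ) < ∑ u, c u := Finset.sum_pos (fun u _ => hc u) Finset.univ_nonempty
  intro N
  induction N with
  | zero =>
    intro δ γ hδ hγ hint
    set v : ℝ := (∑ u, c u * δ u 0) / (∑ u, c u) with hv
    refine ⟨fun _ => v, ?_, ?_, ?_, ?_⟩
    · intro i j _ _; exact le_refl v
    · intro j hj; omega
    · intro j hj
      interval_cases j
      constructor
      · obtain ⟨u0, -, hu0⟩ := Finset.exists_max_image Finset.univ (fun u => δ u 0)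
          Finset.univ_nonempty
        refine ⟨u0, ?_⟩
        rw [hv, div_le_iff₀ hcF]
        calc ∑ u, c u * δ u 0 ≤ ∑ u, c u * δ u0 0 := by
              apply Finset.sum_le_sum
              intro u _
              exact mul_le_mul_of_nonneg_left (hu0 u (Finset.mem_univ u)) (hc u).le
          _ = δ u0 0 * ∑ u, c u := by rw [← Finset.sum_mul]; ring
      · obtain ⟨u0, -, hu0⟩ := Finset.exists_min_image Finset.univ (fun u => δ u 0)
          Finset.univ_nonempty
        refine ⟨u0, ?_⟩
        rw [hv, le_div_iff₀ hcF]
        calc δ u0 0 * ∑ u, c u = ∑ u, c u * δ u0 0 := by rw [← Finset.sum_mul]; ring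
          _ ≤ ∑ u, c u * δ u 0 := by
              apply Finset.sum_le_sum
              intro u _
              exact mul_le_mul_of_nonneg_left (hu0 u (Finset.mem_univ u)) (hc u).le
    · have hvv : (∑ u, c u) * v = ∑ u, c u * δ u 0 := by
        rw [hv, mul_div_cancel₀ _ hcF.ne']
      simp only [zero_add, Finset.prod_range_one]
      calc ∑ u, C (c u) * (X - C (δ u 0))
          = ∑ u, (C (c u) * X - C (c u * δ u 0)) := by
            refine Finset.sum_congr rfl fun u _ => by rw [mul_sub, C_mul]
        _ = (∑ u, C (c u)) * X - ∑ u, C (c u * δ u 0) := by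
            rw [Finset.sum_sub_distrib, ← Finset.sum_mul]
        _ = C (∑ u, c u) * (X - C v) := by
            rw [← map_sum, ← map_sum, mul_sub, ← C_mul, hvv]
  | succ N ih =>
    intro δ γ hδ hγ hint
    set F : Polynomial ℝ := ∑ u, C (c u) * ∏ j ∈ Finset.range (N+1+1), (X - C (δ u j)) with hF
    have heval : ∀ y : ℝ, F.eval y = ∑ u, c u * ∏ k ∈ Finset.range (N+2), (y - δ u k) := by
      intro y
      rw [hF, Polynomial.eval_finset_sum]
      refine Finset.sum_congr rfl fun u _ => ?_
      rw [Polynomial.eval_mul, Polynomial.eval_C, Polynomial.eval_prod]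
      congr 1
      exact Finset.prod_congr rfl fun k _ => by
        rw [Polynomial.eval_sub, Polynomial.eval_X, Polynomial.eval_C]
    have hweak : ∀ u j, j ≤ N →
        0 ≤ (-1:ℝ)^(j+1) * ∏ k ∈ Finset.range (N+2), (γ j - δ u k) := by
      intro u j hj
      apply prod_sign_nonneg (N+2) (j+1) (δ u) (γ j) (by omega)
      · intro k hk
        have h1 : δ u j ≤ δ u k := hδ u k j (by omega) (by omega)
        have h2 : γ j ≤ δ u j := (hint u j (by omega)).1
        linarith
      · intro k hk1 hk2
        have h1 : δ u k ≤ δ u (j+1) := hδ u (j+1) k hk1 (by omega)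
        have h2 : δ u (j+1) ≤ γ j := (hint u j (by omega)).2
        linarith
    have hFsign : ∀ j, j ≤ N → 0 ≤ (-1:ℝ)^(j+1) * F.eval (γ j) := by
      intro j hj
      rw [heval, Finset.mul_sum]
      apply Finset.sum_nonneg
      intro u _
      have h := mul_nonneg (hc u).le (hweak u j hj)
      calc (0:ℝ) ≤ c u * ((-1)^(j+1) * ∏ k ∈ Finset.range (N+2), (γ j - δ u k)) := h
        _ = (-1)^(j+1) * (c u * ∏ k ∈ Finset.range (N+2), (γ j - δ u k)) := by ring
    have hstrict : ∀ (y : ℝ) (s : ℕ), s ≤ N+2 →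
        (∀ u, (∀ k, k < s → y < δ u k) ∧ (∀ k, s ≤ k → k < N+2 → δ u k < y)) →
        0 < (-1:ℝ)^s * F.eval y := by
      intro y s hs h
      rw [heval, Finset.mul_sum]
      apply Finset.sum_pos _ Finset.univ_nonempty
      intro u _
      have h2 := prod_sign_pos (N+2) s (δ u) y hs (h u).1 (h u).2
      have h3 := mul_pos (hc u) h2
      calc (0:ℝ) < c u * ((-1)^s * ∏ k ∈ Finset.range (N+2), (y - δ u k)) := h3
        _ = (-1)^s * (c u * ∏ k ∈ Finset.range (N+2), (y - δ u k)) := by ring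
    have hzoneU : ∀ (j : ℕ) (y : ℝ), j ≤ N+1 → (∀ u, δ u j < y) →
        (∀ i, i+1 = j → y < γ i) → 0 < (-1:ℝ)^j * F.eval y := by
      intro j y hj hlow hup
      apply hstrict y j (by omega)
      intro u
      constructor
      · intro k hk
        have hy := hup (j-1) (by omega)
        have h1 : γ (j-1) ≤ γ k := hγ k (j-1) (by omega) (by omega)
        have h2 : γ k ≤ δ u k := (hint u k (by omega)).1
        linarith
      · intro k hk1 hk2
        have h1 := hδ u j k hk1 (by omega)
        have h2 := hlow u
        linarith
    have hzoneL : ∀ (j : ℕ) (y : ℝ), j ≤ N+1 → (∀ u, y < δ u j) →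
        (j ≤ N → γ j < y) → 0 < (-1:ℝ)^(j+1) * F.eval y := by
      intro j y hj hup hlow
      apply hstrict y (j+1) (by omega)
      intro u
      constructor
      · intro k hk
        have h1 : δ u j ≤ δ u k := hδ u k j (by omega) (by omega)
        have h2 := hup u
        linarith
      · intro k hk1 hk2
        have h1 : δ u k ≤ δ u (j+1) := hδ u (j+1) k hk1 (by omega)
        have h2 : δ u (j+1) ≤ γ j := (hint u j (by omega)).2
        have h3 := hlow (by omega)
        linarith
    have hop : ∀ (e1 e2 : ℝ) (s : ℕ), 0 < (-1:ℝ)^s * e1 → 0 < (-1:ℝ)^(s+1) * e2 →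
        e1 * e2 ≤ 0 := by
      intro e1 e2 s h1 h2
      rcases Nat.even_or_odd s with hs | hs
      · rw [hs.neg_one_pow] at h1
        rw [pow_succ, hs.neg_one_pow] at h2
        nlinarith
      · rw [hs.neg_one_pow] at h1
        rw [pow_succ, hs.neg_one_pow] at h2
        nlinarith
    by_cases hnz : ∀ j, j ≤ N → F.eval (γ j) ≠ 0
    · -- CASE 1 : strict signs at every γ j
      have hsγ : ∀ j, j ≤ N → 0 < (-1:ℝ)^(j+1) * F.eval (γ j) := by
        intro j hj
        refine lt_of_le_of_ne (hFsign j hj) (fun h => hnz j hj ?_)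
        have hpow : ((-1:ℝ))^(j+1) ≠ 0 := pow_ne_zero _ (by norm_num)
        exact (mul_eq_zero.mp h.symm).resolve_left hpow
      have claim : ∀ j, j ≤ N+1 → ∃ r, F.eval r = 0 ∧ (j ≤ N → γ j < r) ∧
          (∀ i, i+1 = j → r < γ i) ∧ (∃ u, r ≤ δ u j) ∧ (∃ u, δ u j ≤ r) := by
        intro j hj
        obtain ⟨umax, -, humax⟩ := Finset.exists_max_image Finset.univ (fun u => δ u j)
          Finset.univ_nonempty
        obtain ⟨umin, -, humin⟩ := Finset.exists_min_image Finset.univ (fun u => δ u j)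
          Finset.univ_nonempty
        rcases Nat.eq_zero_or_pos j with hj0 | hjpos
        · subst hj0
          have hb : ∀ u, δ u 0 < δ umax 0 + 1 :=
            fun u => lt_of_le_of_lt (humax u (Finset.mem_univ u)) (lt_add_one _)
          have hFb : 0 < F.eval (δ umax 0 + 1) := by
            have h := hzoneU 0 (δ umax 0 + 1) (by omega) hb (fun i hi => by omega)
            rwa [pow_zero, one_mul] at h
          have hFγ : F.eval (γ 0) < 0 := by
            have h := hsγ 0 (by omega)
            rw [zero_add, pow_one, neg_one_mul] at h
            linarith
          have hle : γ 0 ≤ δ umax 0 + 1 :=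
            le_trans (hint umax 0 (by omega)).1 (lt_add_one _).le
          obtain ⟨r, hr1, hr2, hr0⟩ := poly_ivt F hle (by nlinarith)
          have hrne : r ≠ γ 0 := fun he => hFγ.ne (he ▸ hr0)
          have hγr : γ 0 < r := lt_of_le_of_ne hr1 (Ne.symm hrne)
          refine ⟨r, hr0, fun _ => hγr, fun i hi => by omega, ⟨umax, ?_⟩, ⟨umin, ?_⟩⟩
          · by_contra hcon
            push_neg at hcon
            have h := hzoneU 0 r (by omega)
              (fun u => lt_of_le_of_lt (humax u (Finset.mem_univ u)) hcon)
              (fun i hi => by omega)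
            rw [hr0, mul_zero] at h
            exact lt_irrefl 0 h
          · by_contra hcon
            push_neg at hcon
            have h := hzoneL 0 r (by omega)
              (fun u => lt_of_lt_of_le hcon (humin u (Finset.mem_univ u)))
              (fun _ => hγr)
            rw [hr0, mul_zero] at h
            exact lt_irrefl 0 h
        · by_cases hjtop : j = N+1
          · subst hjtop
            have ha : ∀ u, min (δ umin (N+1)) (γ N) - 1 < δ u (N+1) := by
              intro u
              have h1 := humin u (Finset.mem_univ u)
              have h2 := min_le_left (δ umin (N+1)) (γ N)
              linarith
            have hFa : 0 < (-1:ℝ)^(N+2) * F.eval (min (δ umin (N+1)) (γ N) - 1) := by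
              apply hstrict _ (N+2) (le_refl _)
              intro u
              refine ⟨fun k hk => ?_, fun k hk1 hk2 => by omega⟩
              have h1 : δ u (N+1) ≤ δ u k := hδ u k (N+1) (by omega) (by omega)
              have h2 := ha u
              linarith
            have hFγ : 0 < (-1:ℝ)^(N+1) * F.eval (γ N) := hsγ N (le_refl N)
            have hle : min (δ umin (N+1)) (γ N) - 1 ≤ γ N := by
              have := min_le_right (δ umin (N+1)) (γ N); linarith
            obtain ⟨r, hr1, hr2, hr0⟩ := poly_ivt F hle (by
              rw [mul_comm]; exact hop _ _ (N+1) hFγ hFa)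
            have hrne : r ≠ γ N := fun he => (hnz N (le_refl N)) (he ▸ hr0)
            have hrlt : r < γ N := lt_of_le_of_ne hr2 hrne
            refine ⟨r, hr0, by omega, ?_, ⟨umax, ?_⟩, ⟨umin, ?_⟩⟩
            · intro i hi
              have hiN : i = N := by omega
              subst hiN; exact hrlt
            · by_contra hcon
              push_neg at hcon
              have h := hzoneU (N+1) r (by omega)
                (fun u => lt_of_le_of_lt (humax u (Finset.mem_univ u)) hcon)
                (fun i hi => by
                  have hiN : i = N := by omega
                  rw [hiN]; exact hrlt)
              rw [hr0, mul_zero] at h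
              exact lt_irrefl 0 h
            · by_contra hcon
              push_neg at hcon
              have h := hzoneL (N+1) r (by omega)
                (fun u => lt_of_lt_of_le hcon (humin u (Finset.mem_univ u)))
                (fun hN => absurd hN (by omega))
              rw [hr0, mul_zero] at h
              exact lt_irrefl 0 h
          · have hjN : j ≤ N := by omega
            have hFj : 0 < (-1:ℝ)^(j+1) * F.eval (γ j) := hsγ j hjN
            have hFj1 : 0 < (-1:ℝ)^j * F.eval (γ (j-1)) := by
              have h := hsγ (j-1) (by omega)
              rwa [show j - 1 + 1 = j by omega] at h
            have hle : γ j ≤ γ (j-1) := hγ (j-1) j (by omega) (by omega)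
            obtain ⟨r, hr1, hr2, hr0⟩ := poly_ivt F hle (by
              rw [mul_comm]; exact hop _ _ j hFj1 hFj)
            have hrnej : r ≠ γ j := fun he => (hnz j hjN) (he ▸ hr0)
            have hrnej1 : r ≠ γ (j-1) := fun he => (hnz (j-1) (by omega)) (he ▸ hr0)
            have hgl : γ j < r := lt_of_le_of_ne hr1 (Ne.symm hrnej)
            have hgu : r < γ (j-1) := lt_of_le_of_ne hr2 hrnej1
            refine ⟨r, hr0, fun _ => hgl, ?_, ⟨umax, ?_⟩, ⟨umin, ?_⟩⟩
            · intro i hi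
              have hii : i = j - 1 := by omega
              subst hii; exact hgu
            · by_contra hcon
              push_neg at hcon
              have h := hzoneU j r (by omega)
                (fun u => lt_of_le_of_lt (humax u (Finset.mem_univ u)) hcon)
                (fun i hi => by
                  have hii : i = j - 1 := by omega
                  rw [hii]; exact hgu)
              rw [hr0, mul_zero] at h
              exact lt_irrefl 0 h
            · by_contra hcon
              push_neg at hcon
              have h := hzoneL j r (by omega)
                (fun u => lt_of_lt_of_le hcon (humin u (Finset.mem_univ u)))
                (fun _ => hgl)
              rw [hr0, mul_zero] at h
              exact lt_irrefl 0 h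
      -- construct the root sequence
      set x : ℕ → ℝ := fun j => if h : j ≤ N+1 then (claim j h).choose else 0 with hxdef
      have hx : ∀ j (h : j ≤ N+1), x j = (claim j h).choose := fun j h => dif_pos h
      have hxroot : ∀ j (h : j ≤ N+1), F.eval (x j) = 0 := by
        intro j h; rw [hx j h]; exact (claim j h).choose_spec.1
      have hxγl : ∀ j, j ≤ N → γ j < x j := by
        intro j h
        rw [hx j (by omega)]
        exact (claim j (by omega)).choose_spec.2.1 h
      have hxγu : ∀ i j, i+1 = j → j ≤ N+1 → x j < γ i := by
        intro i j hij h
        rw [hx j h]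
        exact (claim j h).choose_spec.2.2.1 i hij
      have hxU : ∀ j (h : j ≤ N+1), ∃ u, x j ≤ δ u j := by
        intro j h; rw [hx j h]; exact (claim j h).choose_spec.2.2.2.1
      have hxL : ∀ j (h : j ≤ N+1), ∃ u, δ u j ≤ x j := by
        intro j h; rw [hx j h]; exact (claim j h).choose_spec.2.2.2.2
      have hadj : ∀ i, i+1 ≤ N+1 → x (i+1) ≤ x i := fun i hi =>
        (lt_trans (hxγu i (i+1) rfl hi) (hxγl i (by omega))).le
      have hanti := antitone_of_adjacent hadj
      have hstrictx : ∀ i j, i < j → j ≤ N+1 → x j < x i := by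
        intro i j hij hj
        exact lt_of_le_of_lt (hanti (i+1) j hij hj)
          (lt_trans (hxγu i (i+1) rfl (by omega)) (hxγl i (by omega)))
      -- polynomial identity
      have hPdeg : ∀ u, (∏ j ∈ Finset.range (N+2), (X - C (δ u j)) : Polynomial ℝ).natDegree
          = N+2 := by
        intro u
        rw [Polynomial.natDegree_prod_of_monic _ _ (fun j _ => monic_X_sub_C _)]
        simp [Polynomial.natDegree_X_sub_C]
      have hPmon : ∀ u, (∏ j ∈ Finset.range (N+2), (X - C (δ u j)) : Polynomial ℝ).Monic :=
        fun u => monic_prod_of_monic _ _ (fun j _ => monic_X_sub_C _)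
      have hcoeff : F.coeff (N+2) = ∑ u, c u := by
        rw [hF, Polynomial.finset_sum_coeff]
        refine Finset.sum_congr rfl fun u _ => ?_
        rw [Polynomial.coeff_C_mul]
        have h1 : (∏ j ∈ Finset.range (N+2), (X - C (δ u j)) : Polynomial ℝ).coeff (N+2)
            = 1 := by
          have h2 := (hPmon u).coeff_natDegree
          rwa [hPdeg u] at h2
        rw [h1, mul_one]
      have hdegle : F.natDegree ≤ N+2 := by
        rw [hF]
        apply Polynomial.natDegree_sum_le_of_forall_le
        intro u _
        calc (C (c u) * ∏ j ∈ Finset.range (N+2), (X - C (δ u j))).natDegree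
            ≤ (C (c u) : Polynomial ℝ).natDegree
              + (∏ j ∈ Finset.range (N+2), (X - C (δ u j)) : Polynomial ℝ).natDegree :=
              Polynomial.natDegree_mul_le
          _ ≤ N+2 := by rw [Polynomial.natDegree_C, hPdeg u, zero_add]
      have hdegF : F.natDegree = N+2 :=
        le_antisymm hdegle (Polynomial.le_natDegree_of_ne_zero (by
          rw [hcoeff]; exact hcF.ne'))
      have hFne : F ≠ 0 := fun h => by
        rw [h, Polynomial.coeff_zero] at hcoeff
        exact hcF.ne' hcoeff.symm
      have hleadF : F.leadingCoeff = ∑ u, c u := by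
        rw [Polynomial.leadingCoeff, hdegF, hcoeff]
      set T : Multiset ℝ := (Finset.range (N+2)).val.map x with hT
      have hTcard : Multiset.card T = N+2 := by
        rw [hT, Multiset.card_map]
        exact Finset.card_range (N+2)
      have hTnodup : T.Nodup := by
        rw [hT]
        refine Multiset.Nodup.map_on ?_ (Finset.range (N+2)).nodup
        intro i hi j hj hij
        rw [Finset.mem_val, Finset.mem_range] at hi hj
        by_contra hne
        rcases Nat.lt_or_ge i j with h | h
        · exact (hstrictx i j h (by omega)).ne' hij
        · have h2 : j < i := by omega
          exact (hstrictx j i h2 (by omega)).ne hij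
      have hTle : T ≤ F.roots := by
        apply Multiset.le_iff_count.mpr
        intro a
        by_cases ha : a ∈ T
        · have h1 : Multiset.count a T = 1 := Multiset.count_eq_one_of_mem hTnodup ha
          rw [h1]
          apply Multiset.one_le_count_iff_mem.mpr
          obtain ⟨j, hjmem, rfl⟩ := Multiset.mem_map.mp ha
          rw [Finset.mem_val, Finset.mem_range] at hjmem
          exact Polynomial.mem_roots'.mpr ⟨hFne, hxroot j (by omega)⟩
        · rw [Multiset.count_eq_zero_of_notMem ha]
          exact Nat.zero_le _
      have hrootsT : F.roots = T := by
        have hcard2 : Multiset.card F.roots ≤ Multiset.card T := by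
          rw [hTcard, ← hdegF]
          exact Polynomial.card_roots' F
        exact (Multiset.eq_of_le_of_card_le hTle hcard2).symm
      have hfinal := Polynomial.C_leadingCoeff_mul_prod_multiset_X_sub_C (p := F)
        (by rw [hrootsT, hTcard, hdegF])
      refine ⟨x, hanti, ?_, ?_, ?_⟩
      · intro j hj
        exact ⟨(hxγl j (by omega)).le, (hxγu j (j+1) rfl (by omega)).le⟩
      · intro j hj
        exact ⟨hxU j hj, hxL j hj⟩
      · calc (∑ u, C (c u) * ∏ j ∈ Finset.range (N+1+1), (X - C (δ u j))) = F := by rw [hF]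
          _ = C F.leadingCoeff * (F.roots.map fun a => X - C a).prod := hfinal.symm
          _ = C (∑ u, c u) * ∏ j ∈ Finset.range (N+1+1), (X - C (x j)) := by
              rw [hleadF, hrootsT, hT, Multiset.map_map]
              congr 1
    · -- CASE 2 : some γ j0 is a root of F
      push_neg at hnz
      obtain ⟨j0, hj0N, hj0⟩ := hnz
      have hzero : ∀ u, ∏ k ∈ Finset.range (N+2), (γ j0 - δ u k) = 0 := by
        have hsum : ∑ u, c u * ((-1:ℝ)^(j0+1) * ∏ k ∈ Finset.range (N+2), (γ j0 - δ u k))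
            = 0 := by
          have h1 : ∑ u, c u * ∏ k ∈ Finset.range (N+2), (γ j0 - δ u k) = 0 := by
            rw [← heval (γ j0)]; exact hj0
          calc ∑ u, c u * ((-1:ℝ)^(j0+1) * ∏ k ∈ Finset.range (N+2), (γ j0 - δ u k))
              = (-1:ℝ)^(j0+1) * ∑ u, c u * ∏ k ∈ Finset.range (N+2), (γ j0 - δ u k) := by
                rw [Finset.mul_sum]
                exact Finset.sum_congr rfl fun u _ => by ring
            _ = 0 := by rw [h1, mul_zero]
        have hterm := (Finset.sum_eq_zero_iff_of_nonneg (fun u _ =>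
          mul_nonneg (hc u).le (hweak u j0 hj0N))).mp hsum
        intro u
        have h2 := hterm u (Finset.mem_univ u)
        have h3 : (-1:ℝ)^(j0+1) * ∏ k ∈ Finset.range (N+2), (γ j0 - δ u k) = 0 :=
          (mul_eq_zero.mp h2).resolve_left (hc u).ne'
        exact (mul_eq_zero.mp h3).resolve_left (pow_ne_zero _ (by norm_num))
      have hkey : ∀ u, δ u j0 = γ j0 ∨ δ u (j0+1) = γ j0 := by
        intro u
        obtain ⟨k, hkmem, hk⟩ := Finset.prod_eq_zero_iff.mp (hzero u)
        rw [Finset.mem_range] at hkmem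
        have hkeq : γ j0 = δ u k := sub_eq_zero.mp hk
        rcases Nat.lt_or_ge k (j0+1) with h | h
        · left
          have h1 : δ u j0 ≤ δ u k := hδ u k j0 (by omega) (by omega)
          have h2 : γ j0 ≤ δ u j0 := (hint u j0 (by omega)).1
          linarith
        · right
          have h1 : δ u k ≤ δ u (j0+1) := hδ u (j0+1) k h (by omega)
          have h2 : δ u (j0+1) ≤ γ j0 := (hint u j0 (by omega)).2
          linarith
      set p : ι → ℕ := fun u => if δ u j0 = γ j0 then j0 else j0 + 1 with hpdef
      have hpval : ∀ u, δ u (p u) = γ j0 := by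
        intro u
        simp only [hpdef]
        by_cases h : δ u j0 = γ j0
        · rw [if_pos h]; exact h
        · rw [if_neg h]; exact (hkey u).resolve_left h
      have hprange : ∀ u, j0 ≤ p u ∧ p u ≤ j0 + 1 := by
        intro u; simp only [hpdef]; split <;> omega
      set δ' : ι → ℕ → ℝ := fun u k => δ u (if k < p u then k else k + 1) with hδ'def
      set γ' : ℕ → ℝ := fun k => γ (if k < j0 then k else k + 1) with hγ'def
      have hδ'lt : ∀ u k, k < p u → δ' u k = δ u k := by
        intro u k h; simp only [hδ'def]; rw [if_pos h]
      have hδ'ge : ∀ u k, p u ≤ k → δ' u k = δ u (k+1) := by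
        intro u k h; simp only [hδ'def]; rw [if_neg (by omega)]
      have hγ'lt : ∀ k, k < j0 → γ' k = γ k := by
        intro k h; simp only [hγ'def]; rw [if_pos h]
      have hγ'ge : ∀ k, j0 ≤ k → γ' k = γ (k+1) := by
        intro k h; simp only [hγ'def]; rw [if_neg (by omega)]
      have hδ'anti : ∀ u i j, i ≤ j → j ≤ N → δ' u j ≤ δ' u i := by
        intro u i j hij hjN
        simp only [hδ'def]
        exact hδ u _ _ (by split_ifs <;> omega) (by split_ifs <;> omega)
      have hγ'anti : ∀ i j, i ≤ j → j < N → γ' j ≤ γ' i := by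
        intro i j hij hjN
        simp only [hγ'def]
        exact hγ _ _ (by split_ifs <;> omega) (by split_ifs <;> omega)
      have hint' : ∀ u j, j < N → γ' j ≤ δ' u j ∧ δ' u (j+1) ≤ γ' j := by
        intro u j hjN
        have hpr := hprange u
        constructor
        · by_cases h1 : j < j0
          · rw [hγ'lt j h1, hδ'lt u j (by omega)]
            exact (hint u j (by omega)).1
          · rw [hγ'ge j (by omega)]
            by_cases h2 : j < p u
            · rw [hδ'lt u j h2]
              have hj0j : j = j0 := by omega
              subst hj0j
              calc γ (j+1) ≤ γ j := hγ j (j+1) (by omega) (by omega)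
                _ ≤ δ u j := (hint u j (by omega)).1
            · rw [hδ'ge u j (by omega)]
              exact (hint u (j+1) (by omega)).1
        · by_cases h1 : j + 1 < p u
          · rw [hδ'lt u (j+1) h1, hγ'lt j (by omega)]
            exact (hint u j (by omega)).2
          · rw [hδ'ge u (j+1) (by omega)]
            by_cases h2 : j < j0
            · rw [hγ'lt j h2]
              have hj0e : j0 = j + 1 := by omega
              have h3 : δ u (j+1+1) ≤ γ (j+1) := by
                rw [← hj0e]
                exact (hint u j0 (by omega)).2
              have h4 : γ (j+1) ≤ γ j := hγ j (j+1) (by omega) (by omega)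
              linarith
            · rw [hγ'ge j (by omega)]
              exact (hint u (j+1) (by omega)).2
      obtain ⟨x', hx'anti, hx'int, hx'sand, hx'prod⟩ := ih δ' γ' hδ'anti hγ'anti hint'
      have hsplit : ∀ u, ∏ j ∈ Finset.range (N+1+1), (X - C (δ u j))
          = (X - C (γ j0)) * ∏ j ∈ Finset.range (N+1), (X - C (δ' u j)) := by
        intro u
        calc ∏ j ∈ Finset.range (N+1+1), (X - C (δ u j))
            = (X - C (δ u (p u)))
              * ∏ j ∈ Finset.range (N+1), (X - C (δ u (if j < p u then j else j + 1))) :=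
              prod_splice (fun k => X - C (δ u k)) (N+1) (p u)
                (by have := hprange u; omega)
          _ = (X - C (γ j0)) * ∏ j ∈ Finset.range (N+1), (X - C (δ' u j)) := by
              rw [hpval u]
      have hFsplit : F = (X - C (γ j0)) *
          ∑ u, C (c u) * ∏ j ∈ Finset.range (N+1), (X - C (δ' u j)) := by
        rw [hF, Finset.mul_sum]
        refine Finset.sum_congr rfl fun u _ => ?_
        rw [hsplit u]; ring
      set q : ℕ := if γ j0 < x' j0 then j0 + 1 else j0 with hqdef
      have hqr : j0 ≤ q ∧ q ≤ j0 + 1 := by simp only [hqdef]; split <;> omega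
      have hq1 : q = j0 → x' j0 ≤ γ j0 := by
        intro h; rw [hqdef] at h
        by_contra hcon; push_neg at hcon
        rw [if_pos hcon] at h; omega
      have hq2 : q = j0 + 1 → γ j0 < x' j0 := by
        intro h; rw [hqdef] at h
        by_cases hcon : γ j0 < x' j0
        · exact hcon
        · rw [if_neg hcon] at h; omega
      set x : ℕ → ℝ := fun k => if k < q then x' k else if k = q then γ j0 else x' (k - 1)
        with hxdef
      have hxlt : ∀ k, k < q → x k = x' k := by
        intro k h; simp only [hxdef]; rw [if_pos h]
      have hxq : x q = γ j0 := by
        simp [hxdef]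
      have hxgt : ∀ k, q < k → x k = x' (k-1) := by
        intro k h; simp only [hxdef]; rw [if_neg (by omega), if_neg (by omega)]
      have hlt_j0 : ∀ i, i < j0 → γ j0 ≤ x' i := by
        intro i hi
        have h1 : γ' i ≤ x' i := (hx'int i (by omega)).1
        have h2 : γ' i = γ i := hγ'lt i hi
        have h3 : γ j0 ≤ γ i := hγ i j0 (by omega) (by omega)
        linarith
      have hgt_j0 : ∀ i, j0 < i → i ≤ N → x' i ≤ γ j0 := by
        intro i hi1 hi2
        have h1 : x' ((i-1)+1) ≤ γ' (i-1) := (hx'int (i-1) (by omega)).2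
        have h2 : γ' (i-1) = γ ((i-1)+1) := hγ'ge (i-1) (by omega)
        have h3 : (i-1)+1 = i := by omega
        rw [h3] at h1 h2
        have h4 : γ i ≤ γ j0 := hγ j0 i (by omega) (by omega)
        linarith
      have hadj : ∀ i, i + 1 ≤ N + 1 → x (i+1) ≤ x i := by
        intro i hi
        rcases Nat.lt_or_ge (i+1) q with h | h
        · rw [hxlt (i+1) h, hxlt i (by omega)]
          exact hx'anti i (i+1) (by omega) (by have := hqr; omega)
        · rcases Nat.eq_or_lt_of_le h with h2 | h2
          · rw [← h2, hxq, hxlt i (by omega)]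
            rcases Nat.eq_or_lt_of_le hqr.1 with hq' | hq'
            · exact hlt_j0 i (by omega)
            · have hij0 : i = j0 := by omega
              rw [hij0]
              exact (hq2 (by omega)).le
          · rcases Nat.eq_or_lt_of_le (show q ≤ i by omega) with h3 | h3
            · have hx1 : x i = γ j0 := by rw [← h3]; exact hxq
              have hx2 : x (i+1) = x' i := by
                rw [hxgt (i+1) (by omega)]
                exact congrArg x' (by omega)
              rw [hx1, hx2]
              rcases Nat.eq_or_lt_of_le hqr.1 with hq' | hq'
              · have hij0 : i = j0 := by omega
                rw [hij0]; exact hq1 (by omega)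
              · have hij0 : i = j0 + 1 := by omega
                rw [hij0]
                exact hgt_j0 (j0+1) (by omega) (by omega)
            · rw [hxgt i h3, hxgt (i+1) (by omega)]
              have h5 : (i+1)-1 = i := by omega
              rw [h5]
              exact hx'anti (i-1) i (by omega) (by omega)
      have hxanti := antitone_of_adjacent hadj
      have hxint : ∀ j, j < N + 1 → γ j ≤ x j ∧ x (j+1) ≤ γ j := by
        intro j hjN1
        constructor
        · rcases Nat.lt_or_ge j q with h | h
          · rw [hxlt j h]
            rcases Nat.lt_or_ge j j0 with h2 | h2
            · have h3 : γ' j ≤ x' j := (hx'int j (by omega)).1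
              have h4 : γ' j = γ j := hγ'lt j h2
              linarith
            · have hjj0 : j = j0 := by have := hqr; omega
              rw [hjj0]
              exact (hq2 (by have := hqr; omega)).le
          · rcases Nat.eq_or_lt_of_le h with h2 | h2
            · have hx1 : x j = γ j0 := by rw [← h2]; exact hxq
              rw [hx1]
              exact hγ j0 j (by have := hqr; omega) (by omega)
            · rw [hxgt j h2]
              have h3 : γ' (j-1) ≤ x' (j-1) := (hx'int (j-1) (by have := hqr; omega)).1
              have h4 : γ' (j-1) = γ ((j-1)+1) := hγ'ge (j-1) (by have := hqr; omega)
              have h5 : (j-1)+1 = j := by have := hqr; omega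
              rw [h5] at h4
              linarith
        · rcases Nat.lt_or_ge (j+1) q with h | h
          · rw [hxlt (j+1) h]
            have h3 : x' (j+1) ≤ γ' j := (hx'int j (by have := hqr; omega)).2
            have h4 : γ' j = γ j := hγ'lt j (by have := hqr; omega)
            linarith
          · rcases Nat.eq_or_lt_of_le h with h2 | h2
            · have hx1 : x (j+1) = γ j0 := by rw [← h2]; exact hxq
              rw [hx1]
              exact hγ j j0 (by have := hqr; omega) (by omega)
            · have hx2 : x (j+1) = x' j := by
                rw [hxgt (j+1) h2]
                exact congrArg x' (by omega)
              rw [hx2]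
              rcases Nat.eq_or_lt_of_le (show j0 ≤ j by have := hqr; omega) with h5 | h5
              · rw [← h5]
                exact hq1 (by have := hqr; omega)
              · have h6 : x' ((j-1)+1) ≤ γ' (j-1) := (hx'int (j-1) (by omega)).2
                have h7 : (j-1)+1 = j := by omega
                have h8 : γ' (j-1) = γ ((j-1)+1) := hγ'ge (j-1) (by omega)
                rw [h7] at h6 h8
                linarith
      have hxsand : ∀ j, j ≤ N+1 → (∃ u, x j ≤ δ u j) ∧ (∃ u, δ u j ≤ x j) := by
        intro j hjle
        have hpcase : ∀ u, p u = j0 ∨ p u = j0 + 1 := fun u => by have := hprange u; omega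
        have hpeq : ∀ u, p u = j0 → δ u j0 = γ j0 := by
          intro u h; have h1 := hpval u; rwa [h] at h1
        have hpeq1 : ∀ u, p u = j0 + 1 → δ u (j0+1) = γ j0 := by
          intro u h; have h1 := hpval u; rwa [h] at h1
        rcases Nat.lt_or_ge j j0 with hc1 | hc1
        · rw [hxlt j (by have := hqr; omega)]
          obtain ⟨⟨u1, hu1⟩, ⟨u2, hu2⟩⟩ := hx'sand j (by omega)
          rw [hδ'lt u1 j (by have := hprange u1; omega)] at hu1
          rw [hδ'lt u2 j (by have := hprange u2; omega)] at hu2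
          exact ⟨⟨u1, hu1⟩, ⟨u2, hu2⟩⟩
        rcases Nat.lt_or_ge (j0+1) j with hc2 | hc2
        · rw [hxgt j (by have := hqr; omega)]
          obtain ⟨⟨u1, hu1⟩, ⟨u2, hu2⟩⟩ := hx'sand (j-1) (by omega)
          rw [hδ'ge u1 (j-1) (by have := hprange u1; omega)] at hu1
          rw [hδ'ge u2 (j-1) (by have := hprange u2; omega)] at hu2
          have h7 : (j-1)+1 = j := by omega
          rw [h7] at hu1 hu2
          exact ⟨⟨u1, hu1⟩, ⟨u2, hu2⟩⟩
        rcases Nat.eq_or_lt_of_le hc1 with hj | hj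
        · rcases Nat.eq_or_lt_of_le hqr.1 with hq' | hq'
          · have hjq : j = q := by omega
            rw [hjq, hxq]
            constructor
            · refine ⟨Classical.arbitrary ι, ?_⟩
              rw [show q = j0 by omega]
              exact (hint (Classical.arbitrary ι) j0 (by omega)).1
            · by_contra hcon
              push_neg at hcon
              obtain ⟨u2, hu2⟩ := (hx'sand j0 (by omega)).2
              have hne : δ u2 j0 ≠ γ j0 := by
                intro he
                have h9 := hcon u2
                rw [show q = j0 by omega] at h9
                exact absurd (le_of_eq he) (not_le.mpr h9)
              have hpu2 : p u2 = j0 + 1 := by simp only [hpdef]; rw [if_neg hne]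
              rw [hδ'lt u2 j0 (by omega)] at hu2
              have hxq1 : x' j0 ≤ γ j0 := hq1 (by omega)
              have h9 := hcon u2
              rw [show q = j0 by omega] at h9
              linarith
          · rw [hxlt j (by omega), ← hj]
            obtain ⟨⟨u1, hu1⟩, ⟨u2, hu2⟩⟩ := hx'sand j0 (by omega)
            have h9 := hq2 (by omega)
            constructor
            · rcases hpcase u1 with h | h
              · exfalso
                rw [hδ'ge u1 j0 (by omega)] at hu1
                have h8 : δ u1 (j0+1) ≤ γ j0 := (hint u1 j0 (by omega)).2
                linarith
              · refine ⟨u1, ?_⟩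
                rw [hδ'lt u1 j0 (by omega)] at hu1
                exact hu1
            · rcases hpcase u2 with h | h
              · refine ⟨u2, ?_⟩
                rw [hpeq u2 h]
                exact h9.le
              · refine ⟨u2, ?_⟩
                rw [hδ'lt u2 j0 (by omega)] at hu2
                exact hu2
        · have hjj : j = j0 + 1 := by omega
          rcases Nat.eq_or_lt_of_le hqr.1 with hq' | hq'
          · have hxj : x j = x' j0 := by
              rw [hxgt j (by omega)]
              congr 1
              omega
            rw [hxj, hjj]
            obtain ⟨⟨u1, hu1⟩, ⟨u2, hu2⟩⟩ := hx'sand j0 (by omega)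
            constructor
            · rcases hpcase u1 with h | h
              · refine ⟨u1, ?_⟩
                rw [hδ'ge u1 j0 (by omega)] at hu1
                exact hu1
              · refine ⟨u1, ?_⟩
                rw [hpeq1 u1 h]
                exact hq1 (by omega)
            · rcases hpcase u2 with h | h
              · refine ⟨u2, ?_⟩
                rw [hδ'ge u2 j0 (by omega)] at hu2
                exact hu2
              · refine ⟨u2, ?_⟩
                rw [hδ'lt u2 j0 (by omega)] at hu2
                have h8 : γ j0 ≤ δ u2 j0 := (hint u2 j0 (by omega)).1
                have h9 : x' j0 ≤ γ j0 := hq1 (by omega)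
                have h10 : δ u2 (j0+1) = γ j0 := hpeq1 u2 h
                linarith
          · have hjq : j = q := by omega
            rw [hjq, hxq]
            constructor
            · by_contra hcon
              push_neg at hcon
              obtain ⟨u1, hu1⟩ := (hx'sand j0 (by omega)).1
              have h9 := hq2 (by omega)
              rcases hpcase u1 with h | h
              · rw [hδ'ge u1 j0 (by omega)] at hu1
                have h10 := hcon u1
                rw [show q = j0+1 by omega] at h10
                linarith
              · have h10 := hcon u1
                rw [show q = j0+1 by omega, hpeq1 u1 h] at h10
                exact absurd le_rfl (not_le.mpr h10)
            · refine ⟨Classical.arbitrary ι, ?_⟩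
              rw [show q = j0 + 1 by omega]
              exact (hint (Classical.arbitrary ι) j0 (by omega)).2
      have hprodx : ∏ k ∈ Finset.range (N+1+1), (X - C (x k))
          = (X - C (γ j0)) * ∏ k ∈ Finset.range (N+1), (X - C (x' k)) := by
        calc ∏ k ∈ Finset.range (N+1+1), (X - C (x k))
            = (X - C (x q))
              * ∏ k ∈ Finset.range (N+1), (X - C (x (if k < q then k else k + 1))) :=
              prod_splice (fun k => X - C (x k)) (N+1) q (by have := hqr; omega)
          _ = (X - C (γ j0)) * ∏ k ∈ Finset.range (N+1), (X - C (x' k)) := by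
              rw [hxq]
              congr 1
              refine Finset.prod_congr rfl fun k hk => ?_
              have hxx : x (if k < q then k else k + 1) = x' k := by
                by_cases h : k < q
                · rw [if_pos h]; exact hxlt k h
                · rw [if_neg h, hxgt (k+1) (by omega)]
                  exact congrArg x' (by omega)
              rw [hxx]
      refine ⟨x, hxanti, hxint, hxsand, ?_⟩
      calc (∑ u, C (c u) * ∏ j ∈ Finset.range (N+1+1), (X - C (δ u j)))
          = F := by rw [hF]
        _ = (X - C (γ j0)) * ∑ u, C (c u) * ∏ j ∈ Finset.range (N+1), (X - C (δ' u j)) :=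
            hFsplit
        _ = (X - C (γ j0)) * (C (∑ u, c u) * ∏ j ∈ Finset.range (N+1), (X - C (x' j))) := by
            rw [hx'prod]
        _ = C (∑ u, c u) * ∏ j ∈ Finset.range (N+1+1), (X - C (x j)) := by
            rw [hprodx]; ring


end IFam

/-- `Interlaces n g f`: both are real-rooted with positive leading coefficients,
`g` of degree `n`, `f` of degree `n+1`, and the (decreasingly ordered) roots of `g`
interlace those of `f`. -/
def Interlaces (n : ℕ) (g f : Polynomial ℝ) : Prop :=
  ∃ (cg cf : ℝ) (γ : Fin n → ℝ) (β : Fin (n + 1) → ℝ),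
    0 < cg ∧ 0 < cf ∧ Antitone γ ∧ Antitone β ∧
    g = C cg * ∏ j, (X - C (γ j)) ∧
    f = C cf * ∏ j, (X - C (β j)) ∧
    ∀ j : Fin n, γ j ≤ β j.castSucc ∧ β j.succ ≤ γ j

set_option maxHeartbeats 2000000 in
/-- Interlacing families: if the real-rooted degree-`(n+1)` polynomials
`f_{s_1,…,s_m}` (with positive leading coefficients and decreasingly ordered roots
`β t`) form an interlacing family — i.e. for every partial assignment the polynomials
obtained by summing over all completions, as the next coordinate varies, have a
common interlacing — then the full sum `f_∅` is real-rooted and for every index `j`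
there are assignments `a`, `b` with `λ_j(f_a) ≥ λ_j(f_∅) ≥ λ_j(f_b)`. -/
theorem interlacing_family_root_bounds
    (m n : ℕ) (σT : Fin m → Type) [∀ i, Fintype (σT i)] [∀ i, Nonempty (σT i)]
    (f : (∀ i, σT i) → Polynomial ℝ)
    (c : (∀ i, σT i) → ℝ) (β : (∀ i, σT i) → Fin (n + 1) → ℝ)
    (hc : ∀ t, 0 < c t) (hβ : ∀ t, Antitone (β t))
    (hf : ∀ t, f t = C (c t) * ∏ j, (X - C (β t j)))
    (hfam : ∀ (k : Fin m) (s : ∀ i, σT i), ∃ g : Polynomial ℝ,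
      ∀ u : σT k,
        Interlaces n g
          (∑ t ∈ Finset.univ.filter
              (fun t : (∀ i, σT i) =>
                ∀ i : Fin m, (i : ℕ) < (k : ℕ) + 1 → t i = Function.update s k u i),
            f t)) :
    ∃ (cF : ℝ) (γ : Fin (n + 1) → ℝ), 0 < cF ∧ Antitone γ ∧
      (∑ t : ∀ i, σT i, f t) = C cF * ∏ j, (X - C (γ j)) ∧
      ∀ j : Fin (n + 1), ∃ a b : ∀ i, σT i, γ j ≤ β a j ∧ β b j ≤ γ j := by

  classical
  set G : ℕ → (∀ i, σT i) → Polynomial ℝ := fun k s =>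
    ∑ t ∈ Finset.univ.filter
      (fun t : (∀ i, σT i) => ∀ i : Fin m, (i : ℕ) < k → t i = s i), f t with hG
  have key : ∀ (d : ℕ), ∀ (k : ℕ), m ≤ k + d → ∀ s : (∀ i, σT i),
      ∃ (cF : ℝ) (γ : Fin (n + 1) → ℝ), 0 < cF ∧ Antitone γ ∧
        G k s = C cF * ∏ j, (X - C (γ j)) ∧
        ∀ j : Fin (n + 1), ∃ a b : ∀ i, σT i, γ j ≤ β a j ∧ β b j ≤ γ j := by
    intro d
    induction d with
    | zero =>
      intro k hk s
      have hfil : Finset.univ.filter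
          (fun t : (∀ i, σT i) => ∀ i : Fin m, (i : ℕ) < k → t i = s i) = {s} := by
        ext t
        simp only [Finset.mem_filter, Finset.mem_univ, true_and, Finset.mem_singleton]
        constructor
        · intro h
          funext i
          exact h i (by have := i.isLt; omega)
        · intro h i _
          rw [h]
      refine ⟨c s, β s, hc s, hβ s, ?_, fun j => ⟨s, s, le_refl _, le_refl _⟩⟩
      rw [hG]
      simp only [hfil, Finset.sum_singleton]
      exact hf s
    | succ d ihd =>
      intro k hk s
      by_cases hmk : m ≤ k + d
      · exact ihd k hmk s
      · have hkm : k < m := by omega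
        set kF : Fin m := ⟨k, hkm⟩ with hkF
        have hkFv : (kF : ℕ) = k := rfl
        obtain ⟨g, hg⟩ := hfam kF s
        have hgG : ∀ u : σT kF, Interlaces n g (G (k+1) (Function.update s kF u)) :=
          fun u => hg u
        have hU : ∀ u : σT kF, ∃ (cf : ℝ) (βf : Fin (n+1) → ℝ),
            0 < cf ∧ Antitone βf ∧
            G (k+1) (Function.update s kF u) = C cf * ∏ j, (X - C (βf j)) ∧
            ∃ (cg : ℝ) (γg : Fin n → ℝ), 0 < cg ∧ Antitone γg ∧
              g = C cg * ∏ j, (X - C (γg j)) ∧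
              ∀ j : Fin n, γg j ≤ βf j.castSucc ∧ βf j.succ ≤ γg j := by
          intro u
          obtain ⟨cg, cf, γg, βf, hcg, hcf, hγg, hβf, hgeq, hfeq, hil⟩ := hgG u
          exact ⟨cf, βf, hcf, hβf, hfeq, cg, γg, hcg, hγg, hgeq, hil⟩
        choose cf βf hcf hβfA hrepr cg γg hcg hγgA hgrepr hil using hU
        have hne : Nonempty (σT kF) := inferInstance
        set u0 : σT kF := Classical.arbitrary (σT kF) with hu0
        have hγgu : ∀ u, γg u = γg u0 := by
          intro u
          have h := (hgrepr u).symm.trans (hgrepr u0)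
          exact (IFam.factor_unique _ _ (hcg u) (hcg u0) _ _ (hγgA u) (hγgA u0) h).2
        have hil0 : ∀ u (j : Fin n), γg u0 j ≤ βf u j.castSucc ∧ βf u j.succ ≤ γg u0 j := by
          intro u j
          rw [← hγgu u]
          exact hil u j
        set δN : σT kF → ℕ → ℝ := fun u i => βf u ⟨min i n, by omega⟩ with hδN
        set γN : ℕ → ℝ := fun i => if h : i < n then γg u0 ⟨i, h⟩ else 0 with hγN
        have hδNanti : ∀ u i j, i ≤ j → j ≤ n → δN u j ≤ δN u i := by
          intro u i j hij hj
          simp only [hδN]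
          exact hβfA u (by rw [Fin.mk_le_mk]; omega)
        have hγNanti : ∀ i j, i ≤ j → j < n → γN j ≤ γN i := by
          intro i j hij hj
          simp only [hγN]
          rw [dif_pos hj, dif_pos (by omega : i < n)]
          exact hγgA u0 (by rw [Fin.mk_le_mk]; omega)
        have hδNval : ∀ u (j : Fin (n+1)), δN u (j : ℕ) = βf u j := by
          intro u j
          simp only [hδN]
          exact congrArg (βf u) (by rw [Fin.ext_iff]; simp; omega)
        have hintN : ∀ u j, j < n → γN j ≤ δN u j ∧ δN u (j+1) ≤ γN j := by
          intro u j hj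
          have h := hil0 u ⟨j, hj⟩
          have e1 : δN u j = βf u (Fin.castSucc ⟨j, hj⟩) := by
            have := hδNval u (Fin.castSucc ⟨j, hj⟩)
            simpa using this
          have e2 : δN u (j+1) = βf u (Fin.succ ⟨j, hj⟩) := by
            have := hδNval u (Fin.succ ⟨j, hj⟩)
            simpa using this
          have e3 : γN j = γg u0 ⟨j, hj⟩ := by
            simp only [hγN]
            rw [dif_pos hj]
          rw [e1, e2, e3]
          exact h
        have hfib : G k s = ∑ u : σT kF, G (k+1) (Function.update s kF u) := by
          have hAB : ∀ u : σT kF,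
              (Finset.univ.filter
                (fun t : (∀ i, σT i) => ∀ i : Fin m, (i : ℕ) < k → t i = s i)).filter
                (fun t => t kF = u)
              = Finset.univ.filter
                (fun t : (∀ i, σT i) =>
                  ∀ i : Fin m, (i : ℕ) < k + 1 → t i = Function.update s kF u i) := by
            intro u
            ext t
            simp only [Finset.mem_filter, Finset.mem_univ, true_and]
            constructor
            · rintro ⟨h1, h2⟩ i hi
              by_cases hik : (i : ℕ) = k
              · have hieq : i = kF := by
                  rw [Fin.ext_iff, hkFv]; exact hik
                subst hieq
                rw [Function.update_self]
                exact h2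
              · have hik2 : (i : ℕ) < k := by omega
                rw [Function.update_of_ne (fun he => hik (by rw [he, hkFv]))]
                exact h1 i hik2
            · intro h
              constructor
              · intro i hi
                have hine : i ≠ kF := fun he => by
                  rw [he, hkFv] at hi; omega
                have h3 := h i (by omega)
                rwa [Function.update_of_ne hine] at h3
              · have h3 := h kF (by rw [hkFv]; omega)
                rwa [Function.update_self] at h3
          calc G k s
              = ∑ u : σT kF, ∑ t ∈ (Finset.univ.filter
                  (fun t : (∀ i, σT i) => ∀ i : Fin m, (i : ℕ) < k → t i = s i)).filter
                  (fun t => t kF = u), f t := by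
                rw [hG]
                exact (Finset.sum_fiberwise _ (fun t => t kF) f).symm
            _ = ∑ u : σT kF, G (k+1) (Function.update s kF u) := by
                refine Finset.sum_congr rfl fun u _ => ?_
                rw [hAB u, hG]
        obtain ⟨x, hxanti, hxint, hxsand, hxprod⟩ :=
          IFam.core (σT kF) cf hcf n δN γN hδNanti hγNanti hintN
        have hconv : ∀ u, (∏ j : Fin (n+1), (X - C (βf u j)))
            = ∏ j ∈ Finset.range (n+1), (X - C (δN u j)) := by
          intro u
          rw [← Fin.prod_univ_eq_prod_range (fun j => X - C (δN u j)) (n+1)]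
          refine Finset.prod_congr rfl fun j _ => ?_
          rw [hδNval u j]
        set γF : Fin (n+1) → ℝ := fun j => x (j : ℕ) with hγF
        refine ⟨∑ u, cf u, γF,
          Finset.sum_pos (fun u _ => hcf u) Finset.univ_nonempty, ?_, ?_, ?_⟩
        · intro j j' hjj'
          exact hxanti (j : ℕ) (j' : ℕ) hjj' (by omega)
        · calc G k s = ∑ u : σT kF, G (k+1) (Function.update s kF u) := hfib
            _ = ∑ u : σT kF, C (cf u) * ∏ j ∈ Finset.range (n+1), (X - C (δN u j)) := by
                refine Finset.sum_congr rfl fun u _ => ?_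
                rw [hrepr u, hconv u]
            _ = C (∑ u, cf u) * ∏ j ∈ Finset.range (n+1), (X - C (x j)) := hxprod
            _ = C (∑ u, cf u) * ∏ j : Fin (n+1), (X - C (γF j)) := by
                rw [← Fin.prod_univ_eq_prod_range (fun j => X - C (x j)) (n+1)]
        · intro j
          obtain ⟨⟨u1, hu1⟩, ⟨u2, hu2⟩⟩ := hxsand (j : ℕ) (by omega)
          rw [hδNval u1 j] at hu1
          rw [hδNval u2 j] at hu2
          obtain ⟨cF1, γ1, hcF1, hγ1anti, hrepr1, hab1⟩ :=
            ihd (k+1) (by omega) (Function.update s kF u1)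
          obtain ⟨cF2, γ2, hcF2, hγ2anti, hrepr2, hab2⟩ :=
            ihd (k+1) (by omega) (Function.update s kF u2)
          have he1 : γ1 = βf u1 :=
            (IFam.factor_unique cF1 (cf u1) hcF1 (hcf u1) γ1 (βf u1) hγ1anti (hβfA u1)
              (hrepr1.symm.trans (hrepr u1))).2
          have he2 : γ2 = βf u2 :=
            (IFam.factor_unique cF2 (cf u2) hcF2 (hcf u2) γ2 (βf u2) hγ2anti (hβfA u2)
              (hrepr2.symm.trans (hrepr u2))).2
          obtain ⟨a, b1, hab1', hbb1⟩ := hab1 j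
          obtain ⟨a2, b, hab2', hbb2⟩ := hab2 j
          rw [he1] at hab1'
          rw [he2] at hbb2
          exact ⟨a, b, le_trans hu1 hab1', le_trans hbb2 hu2⟩
  have s0 : ∀ i, σT i := fun i => Classical.arbitrary _
  obtain ⟨cF, γ, h1, h2, h3, h4⟩ := key m 0 (by omega) s0
  refine ⟨cF, γ, h1, h2, ?_, h4⟩
  rw [← h3, hG]
  refine Finset.sum_congr ?_ (fun t _ => rfl)
  ext t
  constructor
  · intro _
    simp only [Finset.mem_filter, Finset.mem_univ, true_and]
    intro i hi
    exact absurd hi (by omega)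
  · intro _
    exact Finset.mem_univ t
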